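/- Let $L$ be a pre-Lie-Rinehart algebra over $R$ with anchor $\rho$, and write $X \rhd f := \rho(X)(f)$ for $f \in R$. For $f \in R$ and $Y \in L$ let $df \cdot Y \in \mathrm{Hom}_R(L,L)$ be the map $X \mapsto (X \rhd f) Y$. Then $X \rhd (df \cdot Y) = df \cdot (X \rhd Y) + d(X \rhd f) \cdot Y - (df \cdot Y) \circ dX$, where $(X \rhd \phi)(Z) = X \rhd \phi(Z) - \phi(X \rhd Z)$ and $dX(Z) = Z \rhd X$. -/

import Mathlib

/-- Let `L` be a pre-Lie-Rinehart algebra over `R` with anchor `ρ`, write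
`X ▷ f := ρ X f` for `f ∈ R` and `X ▷ Y := tri X Y` for `Y ∈ L`.  For `f ∈ R`
and `Y ∈ L`, `df·Y ∈ Hom_R(L,L)` is the map `Z ↦ (Z ▷ f) • Y`, and
`dX(Z) = Z ▷ X`.  Then
`X ▷ (df·Y) = df·(X ▷ Y) + d(X ▷ f)·Y - (df·Y) ∘ dX`,
where `(X ▷ φ)(Z) = X ▷ φ(Z) - φ(X ▷ Z)`.  Evaluated at `Z` this reads as in
the conclusion below. -/
theorem preLieRinehart_tri_df
    (k R L : Type) [Field k] [CommRing R] [Algebra k R]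
    [AddCommGroup L] [Module k L] [Module R L] [IsScalarTower k R L]
    -- the anchor map of the Lie-Rinehart structure (a derivation in each `X`)
    (ρ : L → R → R)
    (hρder : ∀ (X : L) (f g : R), ρ X (f * g) = ρ X f * g + f * ρ X g)
    (hρadd : ∀ (X : L) (f g : R), ρ X (f + g) = ρ X f + ρ X g)
    (hρXadd : ∀ (X Y : L) (f : R), ρ (X + Y) f = ρ X f + ρ Y f)
    (hρRlin : ∀ (g : R) (X : L) (f : R), ρ (g • X) f = g * ρ X f)
    -- the flat torsion-free connection, i.e. the pre-Lie product `X ▷ Y`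
    (tri : L → L → L)
    (haddl : ∀ X Y Z : L, tri (X + Y) Z = tri X Z + tri Y Z)
    (haddr : ∀ X Y Z : L, tri X (Y + Z) = tri X Y + tri X Z)
    (hRlin : ∀ (f : R) (X Y : L), tri (f • X) Y = f • tri X Y)
    (hconn : ∀ (X : L) (f : R) (Y : L),
      tri X (f • Y) = ρ X f • Y + f • tri X Y)
    -- the left pre-Lie identity (flatness and torsion-freeness)
    (hpre : ∀ X Y Z : L,
      tri X (tri Y Z) - tri (tri X Y) Z = tri Y (tri X Z) - tri (tri Y X) Z) :
    ∀ (X Y Z : L) (f : R),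
      tri X ((ρ Z f) • Y) - (ρ (tri X Z) f) • Y
        = (ρ Z f) • tri X Y + (ρ Z (ρ X f)) • Y - (ρ (tri Z X) f) • Y := by
  intro X Y Z f
  have h := hpre X Z (f • Y)
  rw [hconn Z f Y, hconn X f Y, haddr, haddr, hconn X (ρ Z f) Y,
      hconn X f (tri Z Y), hconn (tri X Z) f Y, hconn Z (ρ X f) Y,
      hconn Z f (tri X Y), hconn (tri Z X) f Y] at h
  have h2 := congrArg (f • ·) (hpre X Z Y)
  simp only [smul_sub] at h2
  rw [hconn X (ρ Z f) Y]
  have h3 := congrArg₂ (· - ·) h h2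
  rw [← sub_eq_zero] at h3 ⊢
  abel_nf at h3 ⊢
  exact h3
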